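/- Let r' and r be integers with 1 ≤ r', r ≤ q and rr' ≡ 1 (mod q), and let p be a prime with p ≡ r' (mod q) and p not dividing a₁b₂ − a₂b₁. Then p divides f(i) for some integer i with mn < i ≤ ln if and only if there exist j ∈ {1,2} and a nonnegative integer i_j such that a_j m n + b_j < (a_j i_j + ⟨b_j r⟩_{a_j}) · p ≤ a_j l n + b_j. -/

import Mathlib

/-- `modRep a b` is the smallest positive integer congruent to `b` modulo `a`,
i.e. the unique `s` with `1 ≤ s ≤ a` and `s ≡ b [MOD a]` (for `a, b ≥ 1`),
denoted `⟨b⟩_a` in the paper. -/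
def modRep (a b : ℕ) : ℕ := (b - 1) % a + 1

lemma modRep_pos (a b : ℕ) : 1 ≤ modRep a b := Nat.le_add_left 1 _

lemma modRep_le (a b : ℕ) (ha : 0 < a) : modRep a b ≤ a := by
  have := Nat.mod_lt (b - 1) ha
  unfold modRep
  omega

lemma modRep_modEq (a b : ℕ) (hb : 1 ≤ b) : modRep a b ≡ b [MOD a] := by
  have h : (b - 1) % a ≡ b - 1 [MOD a] := Nat.mod_modEq _ _
  have h2 := h.add_right 1
  unfold modRep
  simpa [Nat.sub_add_cancel hb] using h2

lemma exists_rep (a s k : ℕ) (hsa : s ≤ a) (hk : 1 ≤ k)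
    (h : k ≡ s [MOD a]) : ∃ t, k = a * t + s := by
  rcases hsa.eq_or_lt with rfl | hlt
  · -- s = a
    have hd : s ∣ k := (Nat.modEq_zero_iff_dvd).mp
      (h.trans ((Nat.modEq_zero_iff_dvd).mpr dvd_rfl))
    obtain ⟨c, rfl⟩ := hd
    rcases c with _ | c
    · simp at hk
    · exact ⟨c, by simp [Nat.mul_succ]⟩
  · refine ⟨k / a, ?_⟩
    have hmod : k % a = s := by
      have h' : k % a = s % a := h
      rwa [Nat.mod_eq_of_lt hlt] at h'
    have := Nat.div_add_mod k a
    omega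

lemma aux_factor (a b r r' p m l n : ℕ) (ha : 0 < a) (hb : 0 < b) (hr : 1 ≤ r)
    (hinv : r * r' ≡ 1 [MOD a]) (hpr : p ≡ r' [MOD a]) :
    (∃ i : ℕ, m * n < i ∧ i ≤ l * n ∧ p ∣ a * i + b) ↔
    (∃ k : ℕ, a * m * n + b < (a * k + modRep a (b * r)) * p ∧
        (a * k + modRep a (b * r)) * p ≤ a * l * n + b) := by
  set s := modRep a (b * r) with hs
  have hbr : 1 ≤ b * r := Nat.one_le_iff_ne_zero.mpr (by positivity)
  have hscong : s ≡ b * r [MOD a] := modRep_modEq a (b * r) hbr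
  have hsa : s ≤ a := modRep_le a (b * r) ha
  constructor
  · rintro ⟨i, hmi, hil, c, hc⟩
    have hc1 : 1 ≤ c := by
      rcases Nat.eq_zero_or_pos c with rfl | h
      · simp at hc; omega
      · exact h
    -- c ≡ b * r [MOD a]
    have h2 : c * p ≡ c * r' [MOD a] := hpr.mul_left c
    have h3 : c * p * r ≡ c * r' * r [MOD a] := h2.mul_right r
    have h4 : c * r' * r ≡ c [MOD a] := by
      have := hinv.mul_left c
      calc c * r' * r = c * (r * r') := by ring
        _ ≡ c * 1 [MOD a] := this
        _ = c := by ring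
    have h5 : c * p * r = a * (i * r) + b * r := by
      have : c * p = a * i + b := by rw [mul_comm]; exact hc.symm
      rw [this]; ring
    have h6 : a * (i * r) + b * r ≡ b * r [MOD a] := by
      have : a * (i * r) ≡ 0 [MOD a] := (Nat.modEq_zero_iff_dvd).mpr ⟨i * r, rfl⟩
      simpa using this.add_right (b * r)
    have hccong : c ≡ s [MOD a] := by
      calc c ≡ c * r' * r [MOD a] := h4.symm
        _ ≡ c * p * r [MOD a] := h3.symm
        _ = a * (i * r) + b * r := h5
        _ ≡ b * r [MOD a] := h6
        _ ≡ s [MOD a] := hscong.symm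
    obtain ⟨t, rfl⟩ := exists_rep a s c hsa hc1 hccong
    refine ⟨t, ?_, ?_⟩
    · have heq : (a * t + s) * p = a * i + b := by rw [mul_comm]; exact hc.symm
      have : a * (m * n) < a * i := Nat.mul_lt_mul_of_pos_left hmi ha
      rw [heq]
      have : a * m * n = a * (m * n) := by ring
      omega
    · have heq : (a * t + s) * p = a * i + b := by rw [mul_comm]; exact hc.symm
      have : a * i ≤ a * (l * n) := Nat.mul_le_mul_left a hil
      rw [heq]
      have h7 : a * l * n = a * (l * n) := by ring
      omega
  · rintro ⟨k, h1, h2⟩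
    set K := a * k + s with hK
    have hKcong : K * p ≡ b [MOD a] := by
      have e1 : K ≡ s [MOD a] := by
        have : a * k ≡ 0 [MOD a] := (Nat.modEq_zero_iff_dvd).mpr ⟨k, rfl⟩
        have h := this.add_right s
        rw [zero_add] at h
        exact h
      calc K * p ≡ s * p [MOD a] := e1.mul_right p
        _ ≡ s * r' [MOD a] := hpr.mul_left s
        _ ≡ (b * r) * r' [MOD a] := hscong.mul_right r'
        _ = b * (r * r') := by ring
        _ ≡ b * 1 [MOD a] := hinv.mul_left b
        _ = b := by ring
    have hble : b ≤ K * p := by omega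
    have hdvd : a ∣ K * p - b := (Nat.modEq_iff_dvd' hble).mp hKcong.symm
    obtain ⟨i, hi⟩ := hdvd
    have hKi : K * p = a * i + b := by omega
    refine ⟨i, ?_, ?_, ⟨K, by rw [← hKi, mul_comm]⟩⟩
    · have h7 : a * m * n = a * (m * n) := by ring
      have : a * (m * n) < a * i := by omega
      exact lt_of_mul_lt_mul_left this (Nat.zero_le a)
    · have h7 : a * l * n = a * (l * n) := by ring
      have : a * i ≤ a * (l * n) := by omega
      exact Nat.le_of_mul_le_mul_left this ha

theorem prime_dvd_f_iff_interval (l m : ℕ) (hlm : m < l)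
    (a₁ a₂ b₁ b₂ : ℕ) (ha₁ : 0 < a₁) (ha₂ : 0 < a₂) (hb₁ : 0 < b₁) (hb₂ : 0 < b₂)
    (hcop₁ : Nat.gcd a₁ b₁ = 1) (hcop₂ : Nat.gcd a₂ b₂ = 1) (hne : a₁ * b₂ ≠ a₂ * b₁)
    (q : ℕ) (hq : q = Nat.lcm a₁ a₂)
    (r r' : ℕ) (hr : 1 ≤ r) (hrq : r ≤ q) (hr' : 1 ≤ r') (hr'q : r' ≤ q)
    (hinv : r * r' ≡ 1 [MOD q])
    (p : ℕ) (hp : p.Prime) (hpr : p ≡ r' [MOD q])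
    (hpd : ¬ (p : ℤ) ∣ ((a₁ : ℤ) * b₂ - (a₂ : ℤ) * b₁)) (n : ℕ) :
    (∃ i : ℕ, m * n < i ∧ i ≤ l * n ∧ p ∣ (a₁ * i + b₁) * (a₂ * i + b₂)) ↔
      ((∃ i : ℕ, a₁ * m * n + b₁ < (a₁ * i + modRep a₁ (b₁ * r)) * p ∧
          (a₁ * i + modRep a₁ (b₁ * r)) * p ≤ a₁ * l * n + b₁) ∨
       (∃ i : ℕ, a₂ * m * n + b₂ < (a₂ * i + modRep a₂ (b₂ * r)) * p ∧
          (a₂ * i + modRep a₂ (b₂ * r)) * p ≤ a₂ * l * n + b₂)) := by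
  have hd₁ : a₁ ∣ q := hq ▸ Nat.dvd_lcm_left _ _
  have hd₂ : a₂ ∣ q := hq ▸ Nat.dvd_lcm_right _ _
  have key : (∃ i : ℕ, m * n < i ∧ i ≤ l * n ∧ p ∣ (a₁ * i + b₁) * (a₂ * i + b₂)) ↔
      ((∃ i : ℕ, m * n < i ∧ i ≤ l * n ∧ p ∣ a₁ * i + b₁) ∨
       (∃ i : ℕ, m * n < i ∧ i ≤ l * n ∧ p ∣ a₂ * i + b₂)) := by
    constructor
    · rintro ⟨i, h1, h2, h3⟩
      rcases hp.dvd_mul.mp h3 with h | h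
      · exact Or.inl ⟨i, h1, h2, h⟩
      · exact Or.inr ⟨i, h1, h2, h⟩
    · rintro (⟨i, h1, h2, h3⟩ | ⟨i, h1, h2, h3⟩)
      · exact ⟨i, h1, h2, h3.mul_right _⟩
      · exact ⟨i, h1, h2, h3.mul_left _⟩
  rw [key]
  exact or_congr
    (aux_factor a₁ b₁ r r' p m l n ha₁ hb₁ hr (hinv.of_dvd hd₁) (hpr.of_dvd hd₁))
    (aux_factor a₂ b₂ r r' p m l n ha₂ hb₂ hr (hinv.of_dvd hd₂) (hpr.of_dvd hd₂))
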